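/- arXiv:2503.01422 — 2 statements merged into one kernel-verified Lean document; each statement's English description precedes it below -/
import Mathlib

section
/- Let (Ω, 𝓐, P) be a probability space with a filtration (𝓕_s)_{s∈ℕ}, let L ≥ 0 and M ≥ 0 be real constants, and set Γ = 1 + L·M. Fix natural numbers t and T with 1 ≤ t < T and an integer N ≥ 2. For each i ∈ {2,…,N} let (dⁱ_s)_{t ≤ s ≤ T} be a nonnegative, integrable process adapted to (𝓕_s), and for each s with t ≤ s < T let Aⁱ_s be an event belonging to 𝓕_{s+1}, such that P-almost surely: (a) dⁱ_{s+1} ≤ dⁱ_s + M·1_{Aⁱ_s}, and (b) P(Aⁱ_s | 𝓕_s) ≤ L·dⁱ_s. Define S_s = ∑_{i=2}^{N} dⁱ_s for t ≤ s ≤ T. Then for every real ε > 0, P-almost surely P(S_T ≤ ε | 𝓕_t) ≥ 1 − (Γ^{T−t}/ε)·S_t. -/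
open MeasureTheory Finset

/-- Theorem 1 of the paper: under bounded-increment and Lipschitz-mismatch
assumptions on the pairwise distance processes, early consistency `S t`
lower-bounds the conditional probability of final consistency `S T ≤ ε`. -/
theorem early_consistency_foreshadows_final_consistency
    {Ω : Type*} {𝓐 : MeasurableSpace Ω} {P : Measure Ω} [IsProbabilityMeasure P]
    (ℱ : Filtration ℕ 𝓐)
    (L M : ℝ) (hL : 0 ≤ L) (hM : 0 ≤ M)
    (Γ : ℝ) (hΓ : Γ = 1 + L * M)
    (t T : ℕ) (ht : 1 ≤ t) (htT : t < T)
    (N : ℕ) (hN : 2 ≤ N)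
    (d : ℕ → ℕ → Ω → ℝ) (A : ℕ → ℕ → Set Ω)
    (hd_meas : ∀ i ∈ Finset.Icc 2 N, ∀ s, t ≤ s → s ≤ T → StronglyMeasurable[ℱ s] (d i s))
    (hd_nonneg : ∀ i ∈ Finset.Icc 2 N, ∀ s, t ≤ s → s ≤ T → 0 ≤ᵐ[P] d i s)
    (hd_int : ∀ i ∈ Finset.Icc 2 N, ∀ s, t ≤ s → s ≤ T → Integrable (d i s) P)
    (hA_meas : ∀ i ∈ Finset.Icc 2 N, ∀ s, t ≤ s → s < T → MeasurableSet[ℱ (s + 1)] (A i s))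
    (hbounded : ∀ i ∈ Finset.Icc 2 N, ∀ s, t ≤ s → s < T →
      ∀ᵐ ω ∂P, d i (s + 1) ω ≤ d i s ω + M * (A i s).indicator (fun _ => (1 : ℝ)) ω)
    (hlip : ∀ i ∈ Finset.Icc 2 N, ∀ s, t ≤ s → s < T →
      P[(A i s).indicator (fun _ => (1 : ℝ)) | ℱ s] ≤ᵐ[P] fun ω => L * d i s ω)
    (S : ℕ → Ω → ℝ) (hS : ∀ s, S s = fun ω => ∑ i ∈ Finset.Icc 2 N, d i s ω)
    (ε : ℝ) (hε : 0 < ε) :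
    ∀ᵐ ω ∂P,
      1 - (Γ ^ (T - t) / ε) * S t ω ≤
        (P[({ω | S T ω ≤ ε}).indicator (fun _ => (1 : ℝ)) | ℱ t]) ω := by
  -- basic facts
  have hΓ1 : (1:ℝ) ≤ Γ := by nlinarith [mul_nonneg hL hM]
  have hΓ0 : (0:ℝ) ≤ Γ := by linarith
  have hS_int : ∀ s, t ≤ s → s ≤ T → Integrable (S s) P := by
    intro s h1 h2
    rw [hS]
    exact integrable_finset_sum _ (fun i hi => hd_int i hi s h1 h2)
  have hS_nonneg : ∀ s, t ≤ s → s ≤ T → 0 ≤ᵐ[P] S s := by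
    intro s h1 h2
    have h : ∀ᵐ ω ∂P, ∀ i ∈ Finset.Icc 2 N, 0 ≤ d i s ω := by
      rw [Filter.eventually_all_finset]
      exact fun i hi => hd_nonneg i hi s h1 h2
    filter_upwards [h] with ω hω
    rw [hS]
    exact Finset.sum_nonneg hω
  -- one-step bound
  have hstep : ∀ s, t ≤ s → s < T →
      P[S (s+1)|ℱ s] ≤ᵐ[P] fun ω => Γ * S s ω := by
    intro s h1 h2
    have h2' : s ≤ T := le_of_lt h2
    have h1' : t ≤ s + 1 := le_trans h1 (Nat.le_succ s)
    have h2'' : s + 1 ≤ T := h2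
    -- per-i bound
    have key : ∀ i ∈ Finset.Icc 2 N,
        P[d i (s+1)|ℱ s] ≤ᵐ[P] fun ω => Γ * d i s ω := by
      intro i hi
      have hind_int : Integrable ((A i s).indicator (fun _ => (1:ℝ))) P :=
        (integrable_const (1:ℝ)).indicator ((ℱ.le (s+1)) _ (hA_meas i hi s h1 h2))
      have hrhs_int : Integrable (fun ω => d i s ω +
          M * (A i s).indicator (fun _ => (1:ℝ)) ω) P :=
        (hd_int i hi s h1 h2').add (hind_int.const_mul M)
      have hmono := condExp_mono (m := (ℱ s : MeasurableSpace Ω)) (hd_int i hi (s+1) h1' h2'') hrhs_int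
        (hbounded i hi s h1 h2)
      have hadd := condExp_add (μ := P) (m := ℱ s) (hd_int i hi s h1 h2')
        (hind_int.const_mul M)
      have hsmul := condExp_smul (μ := P) (m := ℱ s) M
        ((A i s).indicator (fun _ => (1:ℝ)))
      have hself := condExp_of_stronglyMeasurable (ℱ.le s)
        (hd_meas i hi s h1 h2') (hd_int i hi s h1 h2')
      have hlip' := hlip i hi s h1 h2
      filter_upwards [hmono, hadd, hsmul, hlip'] with ω hω1 hω2 hω3 hω4
      have : (P[fun ω => d i s ω + M * (A i s).indicator (fun _ => (1:ℝ)) ω|ℱ s]) ω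
          = (P[d i s|ℱ s]) ω + (P[fun ω => M • (A i s).indicator (fun _ => (1:ℝ)) ω|ℱ s]) ω := by
        simpa [smul_eq_mul, Pi.add_def, Pi.smul_def] using hω2
      rw [this] at hω1
      have hω3' : (P[fun ω => M • (A i s).indicator (fun _ => (1:ℝ)) ω|ℱ s]) ω
          = M * (P[(A i s).indicator (fun _ => (1:ℝ))|ℱ s]) ω := by
        simpa [smul_eq_mul, Pi.add_def, Pi.smul_def] using hω3
      rw [hω3', hself] at hω1
      have hML : M * (P[(A i s).indicator (fun _ => (1:ℝ))|ℱ s]) ω ≤ M * (L * d i s ω) :=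
        mul_le_mul_of_nonneg_left hω4 hM
      calc (P[d i (s+1)|ℱ s]) ω ≤ d i s ω + M * (L * d i s ω) := by linarith
        _ = Γ * d i s ω := by rw [hΓ]; ring
    have hsum := condExp_finsetSum (μ := P) (m := ℱ s) (s := Finset.Icc 2 N)
      (f := fun i => d i (s+1)) (fun i hi => hd_int i hi (s+1) h1' h2'')
    have hkey : ∀ᵐ ω ∂P, ∀ i ∈ Finset.Icc 2 N,
        (P[d i (s+1)|ℱ s]) ω ≤ Γ * d i s ω := by
      rw [Filter.eventually_all_finset]; exact key
    have hfun : S (s+1) = ∑ i ∈ Finset.Icc 2 N, d i (s+1) := by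
      rw [hS]; funext ω; simp
    have hSrw : P[S (s+1)|ℱ s] = P[∑ i ∈ Finset.Icc 2 N, d i (s+1)|ℱ s] := by rw [hfun]
    filter_upwards [hsum, hkey] with ω hω1 hω2
    rw [hSrw]
    calc (P[∑ i ∈ Finset.Icc 2 N, d i (s+1)|ℱ s]) ω
        = (∑ i ∈ Finset.Icc 2 N, P[d i (s+1)|ℱ s]) ω := hω1
      _ = ∑ i ∈ Finset.Icc 2 N, (P[d i (s+1)|ℱ s]) ω := by simp
      _ ≤ ∑ i ∈ Finset.Icc 2 N, Γ * d i s ω := Finset.sum_le_sum hω2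
      _ = Γ * S s ω := by rw [hS, Finset.mul_sum]
  -- iterated bound
  have hiter : ∀ k, t + k ≤ T →
      P[S (t + k)|ℱ t] ≤ᵐ[P] fun ω => Γ ^ k * S t ω := by
    intro k
    induction k with
    | zero =>
      intro _
      have hmeasSt : StronglyMeasurable[ℱ t] (S t) := by
        rw [hS]
        exact Finset.stronglyMeasurable_fun_sum _ fun i hi => hd_meas i hi t le_rfl (le_of_lt htT)
      have := condExp_of_stronglyMeasurable (ℱ.le t) hmeasSt (hS_int t le_rfl (le_of_lt htT))
      simp only [Nat.add_zero, pow_zero, one_mul]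
      rw [this]
    | succ k ih =>
      intro hk
      have hk' : t + k < T := by omega
      have hk'' : t + k ≤ T := le_of_lt hk'
      have htower : P[S (t + (k+1))|ℱ t]
          =ᵐ[P] P[P[S (t + k + 1)|ℱ (t + k)]|ℱ t] := by
        rw [show t + (k+1) = t + k + 1 by ring]
        exact (condExp_condExp_of_le (ℱ.mono (Nat.le_add_right t k)) (ℱ.le (t+k))).symm
      have hmono := condExp_mono (m := ℱ t) (μ := P)
        integrable_condExp ((hS_int (t+k) (Nat.le_add_right t k) hk'').const_mul Γ)
        (by simpa using hstep (t+k) (Nat.le_add_right t k) hk')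
      have hsmul := condExp_smul (μ := P) (m := ℱ t) Γ (S (t+k))
      have ihh := ih hk''
      filter_upwards [htower, hmono, hsmul, ihh] with ω hω0 hω1 hω2 hω3
      rw [hω0]
      have hω2' : (P[fun ω => Γ * S (t+k) ω|ℱ t]) ω = Γ * (P[S (t+k)|ℱ t]) ω := by
        simpa [smul_eq_mul, Pi.add_def, Pi.smul_def] using hω2
      calc (P[P[S (t + k + 1)|ℱ (t + k)]|ℱ t]) ω ≤ (P[fun ω => Γ * S (t+k) ω|ℱ t]) ω := hω1
        _ = Γ * (P[S (t+k)|ℱ t]) ω := hω2'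
        _ ≤ Γ * (Γ ^ k * S t ω) := mul_le_mul_of_nonneg_left hω3 hΓ0
        _ = Γ ^ (k+1) * S t ω := by ring
  have hfinal : P[S T|ℱ t] ≤ᵐ[P] fun ω => Γ ^ (T - t) * S t ω := by
    have := hiter (T - t) (by omega)
    rwa [show t + (T - t) = T by omega] at this
  -- Markov step
  set B : Set Ω := {ω | S T ω ≤ ε} with hB
  have hST_meas : StronglyMeasurable (S T) := by
    rw [hS]
    exact Finset.stronglyMeasurable_fun_sum _
      (fun i hi => ((hd_meas i hi T (le_of_lt htT) le_rfl).mono (ℱ.le T)))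
  have hB_meas : MeasurableSet B := hST_meas.measurable measurableSet_Iic
  have hBc_meas : MeasurableSet Bᶜ := hB_meas.compl
  have hindB_int : Integrable (B.indicator (fun _ => (1:ℝ))) P :=
    (integrable_const (1:ℝ)).indicator hB_meas
  have hindBc_int : Integrable (Bᶜ.indicator (fun _ => (1:ℝ))) P :=
    (integrable_const (1:ℝ)).indicator hBc_meas
  -- ε • 1_{Bᶜ} ≤ S T
  have hmarkov_pt : (fun ω => ε * Bᶜ.indicator (fun _ => (1:ℝ)) ω) ≤ᵐ[P] S T := by
    filter_upwards [hS_nonneg T (le_of_lt htT) le_rfl] with ω hω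
    by_cases h : ω ∈ Bᶜ
    · have : ε < S T ω := by simpa [hB] using h
      simp [Set.indicator_of_mem h]
      linarith
    · simpa [Set.indicator_of_notMem h] using hω
  have hmarkov := condExp_mono (m := ℱ t) (μ := P)
    (hindBc_int.const_mul ε) (hS_int T (le_of_lt htT) le_rfl) hmarkov_pt
  have hsmulε := condExp_smul (μ := P) (m := ℱ t) ε (Bᶜ.indicator (fun _ => (1:ℝ)))
  -- 1_B = 1 - 1_{Bᶜ}
  have hcompl : B.indicator (fun _ => (1:ℝ)) =
      (fun _ => (1:ℝ)) - Bᶜ.indicator (fun _ => (1:ℝ)) := by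
    rw [← Set.indicator_compl, compl_compl]
  have hsub := condExp_sub (μ := P) (m := ℱ t) (integrable_const (1:ℝ)) hindBc_int
  have hconst := condExp_const (μ := P) (ℱ.le t) (1:ℝ)
  filter_upwards [hmarkov, hsmulε, hfinal, hsub] with ω hω1 hω2 hω3 hω4
  have hω2' : (P[fun ω => ε • Bᶜ.indicator (fun _ => (1:ℝ)) ω|ℱ t]) ω
      = ε * (P[Bᶜ.indicator (fun _ => (1:ℝ))|ℱ t]) ω := by
    simpa [smul_eq_mul, Pi.add_def, Pi.smul_def] using hω2
  have h1 : ε * (P[Bᶜ.indicator (fun _ => (1:ℝ))|ℱ t]) ω ≤ Γ ^ (T - t) * S t ω := by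
    have : (P[fun ω => ε * Bᶜ.indicator (fun _ => (1:ℝ)) ω|ℱ t]) ω ≤ (P[S T|ℱ t]) ω := hω1
    calc ε * (P[Bᶜ.indicator (fun _ => (1:ℝ))|ℱ t]) ω
        = (P[fun ω => ε * Bᶜ.indicator (fun _ => (1:ℝ)) ω|ℱ t]) ω := by
          rw [← hω2']; simp [smul_eq_mul]
      _ ≤ (P[S T|ℱ t]) ω := hω1
      _ ≤ Γ ^ (T - t) * S t ω := hω3
  have h2 : (P[Bᶜ.indicator (fun _ => (1:ℝ))|ℱ t]) ω ≤ (Γ ^ (T - t) / ε) * S t ω := by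
    rw [div_mul_eq_mul_div, le_div_iff₀ hε]
    linarith [h1]
  have h3 : (P[B.indicator (fun _ => (1:ℝ))|ℱ t]) ω
      = 1 - (P[Bᶜ.indicator (fun _ => (1:ℝ))|ℱ t]) ω := by
    rw [hcompl]
    have : (P[(fun _ => (1:ℝ)) - Bᶜ.indicator (fun _ => (1:ℝ))|ℱ t]) ω
        = (P[(fun _ => (1:ℝ))|ℱ t]) ω - (P[Bᶜ.indicator (fun _ => (1:ℝ))|ℱ t]) ω := hω4
    rw [this, hconst]
  rw [h3]
  linarith [h2]
end

section
/- Let (Ω, 𝓐, P) be a probability space with a filtration (𝓕_s)_{s∈ℕ}, let L ≥ 0 and M ≥ 0 be real constants, and set Γ = 1 + L·M. Fix natural numbers t and T with 1 ≤ t < T and an integer N ≥ 2. For each i ∈ {2,…,N} let (dⁱ_s)_{t ≤ s ≤ T} be a nonnegative, integrable process adapted to (𝓕_s), and for each s with t ≤ s < T let Aⁱ_s be an event belonging to 𝓕_{s+1}, such that P-almost surely: (a) dⁱ_{s+1} ≤ dⁱ_s + M·1_{Aⁱ_s}, and (b) P(Aⁱ_s | 𝓕_s) ≤ L·dⁱ_s.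 Define S_s = ∑_{i=2}^{N} dⁱ_s for t ≤ s ≤ T. Then P-almost surely E[S_T | 𝓕_t] ≤ Γ^{T−t}·S_t. -/
open MeasureTheory Finset

/-- The exponential-growth expectation bound `E[S_T | 𝓕_t] ≤ Γ^(T−t)·S_t` from
the proof of Theorem 1 of the paper. -/
theorem expectation_bound_of_final_consistency
    {Ω : Type*} {𝓐 : MeasurableSpace Ω} {P : Measure Ω} [IsProbabilityMeasure P]
    (ℱ : Filtration ℕ 𝓐)
    (L M : ℝ) (hL : 0 ≤ L) (hM : 0 ≤ M)
    (Γ : ℝ) (hΓ : Γ = 1 + L * M)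
    (t T : ℕ) (ht : 1 ≤ t) (htT : t < T)
    (N : ℕ) (hN : 2 ≤ N)
    (d : ℕ → ℕ → Ω → ℝ) (A : ℕ → ℕ → Set Ω)
    (hd_meas : ∀ i ∈ Finset.Icc 2 N, ∀ s, t ≤ s → s ≤ T → StronglyMeasurable[ℱ s] (d i s))
    (hd_nonneg : ∀ i ∈ Finset.Icc 2 N, ∀ s, t ≤ s → s ≤ T → 0 ≤ᵐ[P] d i s)
    (hd_int : ∀ i ∈ Finset.Icc 2 N, ∀ s, t ≤ s → s ≤ T → Integrable (d i s) P)
    (hA_meas : ∀ i ∈ Finset.Icc 2 N, ∀ s, t ≤ s → s < T → MeasurableSet[ℱ (s + 1)] (A i s))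
    (hbounded : ∀ i ∈ Finset.Icc 2 N, ∀ s, t ≤ s → s < T →
      ∀ᵐ ω ∂P, d i (s + 1) ω ≤ d i s ω + M * (A i s).indicator (fun _ => (1 : ℝ)) ω)
    (hlip : ∀ i ∈ Finset.Icc 2 N, ∀ s, t ≤ s → s < T →
      P[(A i s).indicator (fun _ => (1 : ℝ)) | ℱ s] ≤ᵐ[P] fun ω => L * d i s ω)
    (S : ℕ → Ω → ℝ) (hS : ∀ s, S s = fun ω => ∑ i ∈ Finset.Icc 2 N, d i s ω) :
    P[S T | ℱ t] ≤ᵐ[P] fun ω => Γ ^ (T - t) * S t ω := by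
  have hΓ0 : (0 : ℝ) ≤ Γ := by rw [hΓ]; positivity
  -- integrability of S s
  have hS_int : ∀ s, t ≤ s → s ≤ T → Integrable (S s) P := by
    intro s hs1 hs2
    rw [hS]
    exact integrable_finset_sum _ (fun i hi => hd_int i hi s hs1 hs2)
  have hS_meas : ∀ s, t ≤ s → s ≤ T → StronglyMeasurable[ℱ s] (S s) := by
    intro s hs1 hs2
    rw [hS]
    exact Finset.stronglyMeasurable_fun_sum _ (fun i hi => hd_meas i hi s hs1 hs2)
  -- key one-step bound
  have step : ∀ s, t ≤ s → s < T →
      P[S (s + 1) | ℱ s] ≤ᵐ[P] fun ω => Γ * S s ω := by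
    intro s hs1 hs2
    set g : Ω → ℝ := fun ω =>
      S s ω + M * ∑ i ∈ Finset.Icc 2 N, (A i s).indicator (fun _ => (1 : ℝ)) ω with hg
    have hind_int : ∀ i ∈ Finset.Icc 2 N,
        Integrable ((A i s).indicator (fun _ => (1 : ℝ))) P := by
      intro i hi
      exact (integrable_const (1 : ℝ)).indicator (ℱ.le (s + 1) _ (hA_meas i hi s hs1 hs2))
    have hsum_int : Integrable
        (fun ω => ∑ i ∈ Finset.Icc 2 N, (A i s).indicator (fun _ => (1 : ℝ)) ω) P :=
      integrable_finset_sum _ hind_int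
    have hg_int : Integrable g P :=
      (hS_int s hs1 hs2.le).add (hsum_int.const_mul M)
    have hle : S (s + 1) ≤ᵐ[P] g := by
      have := ae_all_iff.2 (fun i : {i // i ∈ Finset.Icc 2 N} =>
        hbounded i.1 i.2 s hs1 hs2)
      filter_upwards [this] with ω hω
      rw [hS, hg]
      simp only
      rw [Finset.mul_sum]
      refine le_trans (Finset.sum_le_sum (fun i hi => by simpa using hω ⟨i, hi⟩)) ?_
      rw [Finset.sum_add_distrib]
      simp [hS]
    have h1 : P[S (s + 1) | ℱ s] ≤ᵐ[P] P[g | ℱ s] :=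
      condExp_mono (hS_int (s + 1) (by omega) hs2) hg_int hle
    -- compute P[g|ℱ s]
    have h2 : P[g | ℱ s] =ᵐ[P]
        fun ω => S s ω + M * ∑ i ∈ Finset.Icc 2 N,
          (P[(A i s).indicator (fun _ => (1 : ℝ)) | ℱ s]) ω := by
      have hadd := condExp_add (μ := P) (m := ℱ s) (hS_int s hs1 hs2.le)
        (hsum_int.const_mul M)
      have hsmul : P[(fun ω => M * ∑ i ∈ Finset.Icc 2 N,
          (A i s).indicator (fun _ => (1 : ℝ)) ω) | ℱ s] =ᵐ[P]
          fun ω => M *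
            (P[(fun ω => ∑ i ∈ Finset.Icc 2 N, (A i s).indicator (fun _ => (1 : ℝ)) ω) | ℱ s]) ω := by
        have := condExp_smul (μ := P) (m := ℱ s) (M : ℝ)
          (fun ω => ∑ i ∈ Finset.Icc 2 N, (A i s).indicator (fun _ => (1 : ℝ)) ω)
        simpa [Pi.smul_def, smul_eq_mul] using this
      have hsum : P[(fun ω => ∑ i ∈ Finset.Icc 2 N, (A i s).indicator (fun _ => (1 : ℝ)) ω) | ℱ s]
          =ᵐ[P] fun ω => ∑ i ∈ Finset.Icc 2 N,
            (P[(A i s).indicator (fun _ => (1 : ℝ)) | ℱ s]) ω := by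
        have h := condExp_finsetSum (μ := P) (m := ℱ s)
          (s := Finset.Icc 2 N)
          (f := fun i => (A i s).indicator (fun _ => (1 : ℝ))) hind_int
        have e : (fun ω => ∑ i ∈ Finset.Icc 2 N, (A i s).indicator (fun _ => (1 : ℝ)) ω)
            = ∑ i ∈ Finset.Icc 2 N, (fun i => (A i s).indicator (fun _ => (1 : ℝ))) i := by
          funext x; simp
        rw [e]
        refine h.trans (Filter.Eventually.of_forall fun ω => ?_)
        simp
      have hSs : P[S s | ℱ s] = S s :=
        condExp_of_stronglyMeasurable (ℱ.le s) (hS_meas s hs1 hs2.le) (hS_int s hs1 hs2.le)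
      filter_upwards [hadd, hsmul, hsum] with ω h1 h2 h3
      have e0 : (P[g | ℱ s]) ω
          = (P[S s + (fun ω => M * ∑ i ∈ Finset.Icc 2 N,
              (A i s).indicator (fun _ => (1 : ℝ)) ω) | ℱ s]) ω := rfl
      rw [e0, h1, Pi.add_apply, hSs, h2, h3]
    have h3 : (fun ω => S s ω + M * ∑ i ∈ Finset.Icc 2 N,
          (P[(A i s).indicator (fun _ => (1 : ℝ)) | ℱ s]) ω) ≤ᵐ[P]
        fun ω => Γ * S s ω := by
      have := ae_all_iff.2 (fun i : {i // i ∈ Finset.Icc 2 N} =>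
        hlip i.1 i.2 s hs1 hs2)
      filter_upwards [this] with ω hω
      have hle2 : ∑ i ∈ Finset.Icc 2 N, (P[(A i s).indicator (fun _ => (1 : ℝ)) | ℱ s]) ω
          ≤ ∑ i ∈ Finset.Icc 2 N, L * d i s ω :=
        Finset.sum_le_sum (fun i hi => by simpa using hω ⟨i, hi⟩)
      have : M * ∑ i ∈ Finset.Icc 2 N, (P[(A i s).indicator (fun _ => (1 : ℝ)) | ℱ s]) ω
          ≤ M * (L * S s ω) := by
        refine le_trans (mul_le_mul_of_nonneg_left hle2 hM) ?_
        rw [hS]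
        simp [Finset.mul_sum]
      calc S s ω + M * ∑ i ∈ Finset.Icc 2 N,
            (P[(A i s).indicator (fun _ => (1 : ℝ)) | ℱ s]) ω
          ≤ S s ω + M * (L * S s ω) := by linarith
        _ = Γ * S s ω := by rw [hΓ]; ring
    calc P[S (s + 1) | ℱ s] ≤ᵐ[P] P[g | ℱ s] := h1
      _ ≤ᵐ[P] fun ω => Γ * S s ω := h2.le.trans h3
  -- induction
  have main : ∀ n, t + n ≤ T →
      P[S (t + n) | ℱ t] ≤ᵐ[P] fun ω => Γ ^ n * S t ω := by
    intro n
    induction n with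
    | zero =>
      intro _
      rw [Nat.add_zero, condExp_of_stronglyMeasurable (ℱ.le t)
        (hS_meas t le_rfl htT.le) (hS_int t le_rfl htT.le)]
      filter_upwards with ω
      simp
    | succ n ih =>
      intro hn
      have hn' : t + n < T := by omega
      have htow := condExp_condExp_of_le (μ := P) (ℱ.mono (Nat.le_add_right t n))
        (ℱ.le (t + n)) (f := S (t + n + 1))
      have hmono : P[P[S (t + n + 1) | ℱ (t + n)] | ℱ t] ≤ᵐ[P]
          P[fun ω => Γ * S (t + n) ω | ℱ t] :=
        condExp_mono integrable_condExp ((hS_int (t + n) (by omega) hn'.le).const_mul Γ)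
          (step (t + n) (by omega) hn')
      have hsmul : P[(fun ω => Γ * S (t + n) ω) | ℱ t] =ᵐ[P]
          fun ω => Γ * (P[S (t + n) | ℱ t]) ω := by
        have := condExp_smul (μ := P) (m := ℱ t) (Γ : ℝ) (S (t + n))
        simpa [Pi.smul_def, smul_eq_mul] using this
      have hfin : (fun ω => Γ * (P[S (t + n) | ℱ t]) ω) ≤ᵐ[P]
          fun ω => Γ ^ (n + 1) * S t ω := by
        filter_upwards [ih hn'.le] with ω hω
        calc Γ * (P[S (t + n) | ℱ t]) ω ≤ Γ * (Γ ^ n * S t ω) :=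
              mul_le_mul_of_nonneg_left hω hΓ0
          _ = Γ ^ (n + 1) * S t ω := by ring
      have : P[S (t + n + 1) | ℱ t] =ᵐ[P] P[P[S (t + n + 1) | ℱ (t + n)] | ℱ t] := htow.symm
      calc P[S (t + (n + 1)) | ℱ t]
          =ᵐ[P] P[P[S (t + n + 1) | ℱ (t + n)] | ℱ t] := by
            rw [show t + (n + 1) = t + n + 1 by ring]; exact htow.symm
        _ ≤ᵐ[P] P[fun ω => Γ * S (t + n) ω | ℱ t] := hmono
        _ =ᵐ[P] fun ω => Γ * (P[S (t + n) | ℱ t]) ω := hsmul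
        _ ≤ᵐ[P] fun ω => Γ ^ (n + 1) * S t ω := hfin
  have := main (T - t) (by omega)
  rwa [show t + (T - t) = T by omega] at this
end
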